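/- For every measurable set E ⊆ ℝⁿ, the measure theoretic boundary is the intersection of the topological boundaries of all measurable representatives of E: ∂⁻E = ⋂ {∂F : F ⊆ ℝⁿ measurable with |E Δ F| = 0}, where ∂F denotes the topological boundary and Δ the symmetric difference. -/

import Mathlib

open MeasureTheory Metric Set Filter
open scoped ENNReal Topology

/-- The measure theoretic boundary `∂⁻E`. Note `volume (ball x r) = ω_n rⁿ`. -/
def mtb (n : ℕ) (E : Set (EuclideanSpace ℝ (Fin n))) : Set (EuclideanSpace ℝ (Fin n)) :=
  {x | ∀ r > (0 : ℝ), 0 < volume (E ∩ ball x r) ∧ volume (E ∩ ball x r) < volume (ball x r)}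

/-- The measure theoretic boundary of a measurable set `E` is the
intersection of the topological boundaries of all measurable representatives of `E`. -/
theorem mtb_eq_sInter_frontier (n : ℕ) (hn : 1 ≤ n) (E : Set (EuclideanSpace ℝ (Fin n)))
    (hE : MeasurableSet E) :
    mtb n E = ⋂₀ {B : Set (EuclideanSpace ℝ (Fin n)) |
      ∃ F : Set (EuclideanSpace ℝ (Fin n)), MeasurableSet F ∧
        volume ((E \ F) ∪ (F \ E)) = 0 ∧ B = frontier F} := by
  ext x
  constructor
  · rintro hx B ⟨F, hF, hEF, rfl⟩
    have hae : E =ᵐ[volume] F := by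
      rw [ae_eq_set]
      constructor
      · exact measure_mono_null subset_union_left hEF
      · exact measure_mono_null subset_union_right hEF
    constructor
    · -- x ∈ closure F
      rw [Metric.mem_closure_iff]
      intro ε hε
      have h := (hx ε hε).1
      have heq : volume (E ∩ ball x ε) = volume (F ∩ ball x ε) :=
        measure_congr (hae.inter (ae_eq_refl _))
      rw [heq] at h
      have hne : (F ∩ ball x ε).Nonempty := by
        rcases Set.eq_empty_or_nonempty (F ∩ ball x ε) with he | he
        · rw [he, measure_empty] at h; exact absurd h (lt_irrefl 0)
        · exact he
      obtain ⟨y, hyF, hyb⟩ := hne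
      exact ⟨y, hyF, mem_ball'.mp hyb⟩
    · -- x ∉ interior F
      intro hxi
      rw [mem_interior_iff_mem_nhds, Metric.mem_nhds_iff] at hxi
      obtain ⟨ε, hε, hb⟩ := hxi
      have h := (hx ε hε).2
      have heq : volume (E ∩ ball x ε) = volume (F ∩ ball x ε) :=
        measure_congr (hae.inter (ae_eq_refl _))
      rw [heq, Set.inter_eq_self_of_subset_right hb] at h
      exact absurd h (lt_irrefl _)
  · intro hx
    intro r hr
    by_contra hcon
    push_neg at hcon
    rcases eq_or_lt_of_le (zero_le : (0 : ℝ≥0∞) ≤ volume (E ∩ ball x r)) with h0 | h0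
    · -- volume (E ∩ ball x r) = 0, take F = E \ ball x r
      have hmem : frontier (E \ ball x r) ∈ {B : Set (EuclideanSpace ℝ (Fin n)) |
          ∃ F, MeasurableSet F ∧ volume ((E \ F) ∪ (F \ E)) = 0 ∧ B = frontier F} := by
        refine ⟨E \ ball x r, hE.diff measurableSet_ball, ?_, rfl⟩
        have h1 : E \ (E \ ball x r) = E ∩ ball x r := Set.diff_diff_right_self E (ball x r)
        have h2 : (E \ ball x r) \ E = ∅ := Set.diff_eq_empty.mpr Set.diff_subset
        rw [h1, h2, Set.union_empty, ← h0]
      have hxf := hx _ hmem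
      have hxc : x ∈ closure (E \ ball x r) := hxf.1
      rw [Metric.mem_closure_iff] at hxc
      obtain ⟨y, hy, hd⟩ := hxc r hr
      exact hy.2 (by rwa [mem_ball, dist_comm])
    · -- volume (E ∩ ball x r) = volume (ball x r), take F = E ∪ ball x r
      have hVeq : volume (E ∩ ball x r) = volume (ball x r) :=
        le_antisymm (measure_mono Set.inter_subset_right) (hcon h0)
      have hnull : volume (ball x r \ E) = 0 := by
        have hadd := measure_inter_add_diff (μ := volume) (ball x r) hE
        rw [Set.inter_comm, hVeq] at hadd
        have hfin : volume (ball x r) ≠ ⊤ := measure_ball_lt_top.ne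
        have h' : volume (ball x r) + volume (ball x r \ E) = volume (ball x r) + 0 := by
          rw [add_zero]; exact hadd
        exact (ENNReal.add_right_inj hfin).mp h'
      have hmem : frontier (E ∪ ball x r) ∈ {B : Set (EuclideanSpace ℝ (Fin n)) |
          ∃ F, MeasurableSet F ∧ volume ((E \ F) ∪ (F \ E)) = 0 ∧ B = frontier F} := by
        refine ⟨E ∪ ball x r, hE.union measurableSet_ball, ?_, rfl⟩
        have h1 : E \ (E ∪ ball x r) = ∅ := Set.diff_eq_empty.mpr Set.subset_union_left
        have h2 : (E ∪ ball x r) \ E ⊆ ball x r \ E := by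
          intro y hy; exact ⟨hy.1.resolve_left hy.2, hy.2⟩
        rw [h1, Set.empty_union]
        exact measure_mono_null h2 hnull
      have hxf := hx _ hmem
      have hxi : x ∈ interior (E ∪ ball x r) :=
        interior_maximal Set.subset_union_right isOpen_ball (mem_ball_self hr)
      exact hxf.2 hxi
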